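/- If c is a common root of φ₁ and φ₂, then the vector (−f₂(c)·(1, c, …, c^{n₁−1}), f₁(c)·(1, c, …, c^{n₂−1}))ᵀ lies in the kernel of the transpose of the square double ideal matrix H*_{φ₁,φ₂}(f₁,f₂)_{m×m} with m = n₁+n₂. -/
import Mathlib


open Polynomial Matrix

/-- The rotation matrix `H_φ` of a monic polynomial
`φ(x) = xⁿ − φ_{n-1}x^{n-1} − ⋯ − φ₁x − φ₀` (note `φᵢ = -(coeff φ i)` for `i < n`). -/
def rotMat (n : ℕ) (φ : Polynomial ℂ) : Matrix (Fin n) (Fin n) ℂ :=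
  Matrix.of fun i j =>
    if (j : ℕ) + 1 < n then (if (i : ℕ) = (j : ℕ) + 1 then 1 else 0)
    else -φ.coeff (i : ℕ)

/-- The polynomial `f(x) = Σ_{j=0}^{n-1} fⱼ xʲ` associated to a vector `f`. -/
noncomputable def vecPoly (n : ℕ) (f : Fin n → ℂ) : Polynomial ℂ :=
  ∑ j : Fin n, Polynomial.C (f j) * Polynomial.X ^ (j : ℕ)

/-- The `(n₁+n₂) × m` double ideal matrix, stacking `[f₁, H₁f₁, …, H₁^{m-1}f₁]`
on top of `[f₂, H₂f₂, …, H₂^{m-1}f₂]`. -/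
noncomputable def dblIdealMat (n₁ n₂ m : ℕ) (H₁ : Matrix (Fin n₁) (Fin n₁) ℂ)
    (H₂ : Matrix (Fin n₂) (Fin n₂) ℂ) (f₁ : Fin n₁ → ℂ) (f₂ : Fin n₂ → ℂ) :
    Matrix (Fin n₁ ⊕ Fin n₂) (Fin m) ℂ :=
  Matrix.of fun i j =>
    Sum.elim ((H₁ ^ (j : ℕ)).mulVec f₁) ((H₂ ^ (j : ℕ)).mulVec f₂) i

/-- If `c` is a common root of `φ₁` and `φ₂`, then the vector
`(−f₂(c)·(1, c, …, c^{n₁−1}), f₁(c)·(1, c, …, c^{n₂−1}))ᵀ` lies in the kernel of the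
transpose of the square double ideal matrix `H*_{φ₁,φ₂}(f₁,f₂)_{m×m}`, `m = n₁+n₂`. -/

lemma rot_col (n : ℕ) (φ : Polynomial ℂ) (hm : φ.Monic)
    (hd : φ.natDegree = n) (c : ℂ) (hc : φ.IsRoot c) (t : Fin n) :
    ∑ a : Fin n, c ^ (a : ℕ) * rotMat n φ a t = c ^ ((t : ℕ) + 1) := by
  by_cases h : (t : ℕ) + 1 < n
  · rw [Finset.sum_eq_single (⟨(t:ℕ)+1, h⟩ : Fin n)]
    · simp [rotMat, h]
    · intro b _ hb
      simp only [rotMat, Matrix.of_apply, if_pos h]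
      rw [if_neg, mul_zero]
      intro hb'
      exact hb (Fin.ext hb')
    · intro hb; exact absurd (Finset.mem_univ _) hb
  · have ht : (t : ℕ) + 1 = n := Nat.le_antisymm t.2 (le_of_not_gt h)
    simp only [rotMat, Matrix.of_apply, if_neg h]
    have heval : (0:ℂ) = ∑ i ∈ Finset.range (n+1), φ.coeff i * c ^ i := by
      rw [← hc, eval_eq_sum_range, hd]
    rw [Finset.sum_range_succ] at heval
    have hlead : φ.coeff n = 1 := by rw [← hd]; exact hm.coeff_natDegree
    rw [hlead, one_mul] at heval
    have hsum : ∑ i ∈ Finset.range n, φ.coeff i * c ^ i = -c ^ n := by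
      linear_combination -heval
    calc ∑ a : Fin n, c ^ (a:ℕ) * -φ.coeff (a:ℕ)
        = -∑ a ∈ Finset.range n, φ.coeff a * c ^ a := by
          rw [Fin.sum_univ_eq_sum_range (fun a => c ^ a * -φ.coeff a), ← Finset.sum_neg_distrib]
          exact Finset.sum_congr rfl (fun a _ => by ring)
      _ = c ^ ((t:ℕ)+1) := by rw [hsum, ht]; ring

lemma rot_pow (n : ℕ) (φ : Polynomial ℂ) (hm : φ.Monic)
    (hd : φ.natDegree = n) (c : ℂ) (hc : φ.IsRoot c) (k : ℕ) (b : Fin n) :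
    ∑ a : Fin n, c ^ (a : ℕ) * (rotMat n φ ^ k) a b = c ^ k * c ^ (b : ℕ) := by
  induction k with
  | zero => simp [Matrix.one_apply, Finset.sum_ite_eq' Finset.univ b (fun a => c ^ (a:ℕ))]
  | succ k ih =>
    rw [pow_succ']
    have : ∀ a : Fin n, c ^ (a:ℕ) * (rotMat n φ * rotMat n φ ^ k) a b
        = ∑ t : Fin n, (c ^ (a:ℕ) * rotMat n φ a t) * (rotMat n φ ^ k) t b := by
      intro a
      rw [Matrix.mul_apply, Finset.mul_sum]
      exact Finset.sum_congr rfl (fun t _ => by ring)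
    simp only [this]
    rw [Finset.sum_comm]
    have : ∀ t : Fin n, ∑ a : Fin n, (c ^ (a:ℕ) * rotMat n φ a t) * (rotMat n φ ^ k) t b
        = c ^ ((t:ℕ)+1) * (rotMat n φ ^ k) t b := by
      intro t
      rw [← Finset.sum_mul, rot_col n φ hm hd c hc t]
    simp only [this]
    calc ∑ t : Fin n, c ^ ((t:ℕ)+1) * (rotMat n φ ^ k) t b
        = c * ∑ t : Fin n, c ^ (t:ℕ) * (rotMat n φ ^ k) t b := by
          rw [Finset.mul_sum]; exact Finset.sum_congr rfl (fun t _ => by ring)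
      _ = c ^ (k+1) * c ^ (b:ℕ) := by rw [ih]; ring

lemma rot_mulVec_sum (n : ℕ) (φ : Polynomial ℂ) (hm : φ.Monic)
    (hd : φ.natDegree = n) (c : ℂ) (hc : φ.IsRoot c) (f : Fin n → ℂ) (k : ℕ) :
    ∑ a : Fin n, ((rotMat n φ ^ k).mulVec f) a * c ^ (a : ℕ)
      = c ^ k * ∑ t : Fin n, f t * c ^ (t : ℕ) := by
  have : ∀ a : Fin n, ((rotMat n φ ^ k).mulVec f) a * c ^ (a:ℕ)
      = ∑ t : Fin n, (c ^ (a:ℕ) * (rotMat n φ ^ k) a t) * f t := by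
    intro a
    rw [Matrix.mulVec, dotProduct, Finset.sum_mul]
    exact Finset.sum_congr rfl (fun t _ => by ring)
  simp only [this]
  rw [Finset.sum_comm]
  have h2 : ∀ t : Fin n, ∑ a : Fin n, (c ^ (a:ℕ) * (rotMat n φ ^ k) a t) * f t
      = c ^ k * c ^ (t:ℕ) * f t := by
    intro t
    rw [← Finset.sum_mul, rot_pow n φ hm hd c hc k t]
  simp only [h2]
  rw [Finset.mul_sum]
  exact Finset.sum_congr rfl (fun t _ => by ring)

theorem dblIdealMat_transpose_kernel_vector (n₁ n₂ : ℕ) (hn₁ : 0 < n₁) (hn₂ : 0 < n₂)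
    (φ₁ φ₂ : Polynomial ℂ) (hm₁ : φ₁.Monic) (hm₂ : φ₂.Monic)
    (hd₁ : φ₁.natDegree = n₁) (hd₂ : φ₂.natDegree = n₂)
    (h₁0 : φ₁.coeff 0 ≠ 0) (h₂0 : φ₂.coeff 0 ≠ 0)
    (f₁ : Fin n₁ → ℂ) (f₂ : Fin n₂ → ℂ)
    (c : ℂ) (hc₁ : φ₁.IsRoot c) (hc₂ : φ₂.IsRoot c) :
    (dblIdealMat n₁ n₂ (n₁ + n₂) (rotMat n₁ φ₁) (rotMat n₂ φ₂) f₁ f₂)ᵀ.mulVec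
        (Sum.elim
          (fun a : Fin n₁ => -(∑ j : Fin n₂, f₂ j * c ^ (j : ℕ)) * c ^ (a : ℕ))
          (fun b : Fin n₂ => (∑ j : Fin n₁, f₁ j * c ^ (j : ℕ)) * c ^ (b : ℕ))) = 0 := by
  funext j
  simp only [Matrix.mulVec, dotProduct, Matrix.transpose_apply, Pi.zero_apply]
  rw [Fintype.sum_sum_type]
  simp only [dblIdealMat, Matrix.of_apply, Sum.elim_inl, Sum.elim_inr]
  have e1 : ∑ a : Fin n₁, ((rotMat n₁ φ₁ ^ (j:ℕ)).mulVec f₁) a *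
      (-(∑ j : Fin n₂, f₂ j * c ^ (j : ℕ)) * c ^ (a : ℕ))
      = -(∑ j : Fin n₂, f₂ j * c ^ (j : ℕ)) * (c ^ (j:ℕ) * ∑ t : Fin n₁, f₁ t * c ^ (t:ℕ)) := by
    rw [← rot_mulVec_sum n₁ φ₁ hm₁ hd₁ c hc₁ f₁ (j:ℕ), Finset.mul_sum]
    exact Finset.sum_congr rfl (fun a _ => by ring)
  have e2 : ∑ b : Fin n₂, ((rotMat n₂ φ₂ ^ (j:ℕ)).mulVec f₂) b *
      ((∑ j : Fin n₁, f₁ j * c ^ (j : ℕ)) * c ^ (b : ℕ))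
      = (∑ j : Fin n₁, f₁ j * c ^ (j : ℕ)) * (c ^ (j:ℕ) * ∑ t : Fin n₂, f₂ t * c ^ (t:ℕ)) := by
    rw [← rot_mulVec_sum n₂ φ₂ hm₂ hd₂ c hc₂ f₂ (j:ℕ), Finset.mul_sum]
    exact Finset.sum_congr rfl (fun b _ => by ring)
  rw [e1, e2]; ring
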